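/- The vector potential A¹ = u₁u₂, A² = ½u₂² - (i√3/96)u₁³ on ℂ² with unit e = ∂/∂u₂ satisfies the oriented associativity equations: ∂_j∂_l A^i ∂_k∂_m A^l = ∂_k∂_l A^i ∂_j∂_m A^l for all indices, and ∂₂∂_i A^j = δ_i^j. Moreover, lowering the index of the potential with the constant metric η = [[0,1/12],[1/12,0]] yields an exact 1-form, i.e. the structure constants cⁱ_{jk} = ∂_j∂_k A^i satisfy η_{il}cˡ_{jk} = η_{jl}cˡ_{ik}, so this flat F-manifold structure comes from a Frobenius potential. -/

import Mathlib

open scoped BigOperators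

/-- Partial derivative in the `i`-th coordinate direction on `ℂⁿ`. -/
noncomputable def pd {n : ℕ} (i : Fin n) (f : (Fin n → ℂ) → ℂ) (p : Fin n → ℂ) : ℂ :=
  fderiv ℂ f p (Pi.single i 1)

/-- Second partial derivative `∂_i ∂_j f`. -/
noncomputable def sd {n : ℕ} (i j : Fin n) (f : (Fin n → ℂ) → ℂ) (p : Fin n → ℂ) : ℂ :=
  pd i (pd j f) p

/-- The vector potential of the bi-flat F-structure on the orbit space of `G₄`:
`A¹ = u₁u₂`, `A² = ½u₂² - (i√3/96)u₁³`. -/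
noncomputable def AG4 : Fin 2 → (Fin 2 → ℂ) → ℂ :=
  ![fun p => p 0 * p 1,
    fun p => (1/2) * (p 1)^2 - (Complex.I * (Real.sqrt 3 : ℂ) / 96) * (p 0)^3]

/-- Structure constants `cⁱ_{jk} = ∂_j∂_k A^i` of the `G₄` potential. -/
noncomputable def cG4 (i j k : Fin 2) (p : Fin 2 → ℂ) : ℂ := sd j k (AG4 i) p

/-- The invariant metric `η = [[0,1/12],[1/12,0]]`. -/
noncomputable def ηG4 : Fin 2 → Fin 2 → ℂ := ![![0, 1/12], ![1/12, 0]]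

/- Auxiliary material -/

noncomputable def CC : ℂ := Complex.I * (Real.sqrt 3 : ℂ) / 96

noncomputable def pr (i : Fin 2) : (Fin 2 → ℂ) →L[ℂ] ℂ := ContinuousLinearMap.proj i

lemma hprj (i : Fin 2) (p : Fin 2 → ℂ) : HasFDerivAt (fun q : Fin 2 → ℂ => q i) (pr i) p :=
  (pr i).hasFDerivAt

lemma pd_of_has {f : (Fin 2 → ℂ) → ℂ} {L : (Fin 2 → ℂ) →L[ℂ] ℂ} {p} (h : HasFDerivAt f L p)
    (j : Fin 2) : pd j f p = L (Pi.single j 1) := by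
  rw [pd, h.fderiv]

lemma pd_proj (i j : Fin 2) (p : Fin 2 → ℂ) :
    pd j (fun q => q i) p = if i = j then 1 else 0 := by
  rw [pd_of_has (hprj i p) j]
  simp [pr, Pi.single_apply]

lemma pdA0 (j : Fin 2) (p : Fin 2 → ℂ) :
    pd j (AG4 0) p = if j = 0 then p 1 else p 0 := by
  have h : HasFDerivAt (AG4 0) (p 0 • pr 1 + p 1 • pr 0) p := by
    exact ((hprj 0 p).mul (hprj 1 p) : HasFDerivAt (fun q : Fin 2 → ℂ => q 0 * q 1) _ p)
  rw [pd_of_has h j]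
  fin_cases j <;> simp [pr, Pi.single_apply]

lemma pdA1 (j : Fin 2) (p : Fin 2 → ℂ) :
    pd j (AG4 1) p = if j = 0 then -(3*CC) * p 0 ^ 2 else p 1 := by
  have hA : AG4 1 = fun q => (1/2 : ℂ) * (q 1 * q 1) - CC * (q 0 * q 0 * q 0) := by
    funext q; simp [AG4, CC]; ring
  have h : HasFDerivAt (fun q : Fin 2 → ℂ => (1/2 : ℂ) * (q 1 * q 1) - CC * (q 0 * q 0 * q 0))
      ((1/2 : ℂ) • (p 1 • pr 1 + p 1 • pr 1) -
        CC • ((p 0 * p 0) • pr 0 + p 0 • (p 0 • pr 0 + p 0 • pr 0))) p :=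
    (((hprj 1 p).mul (hprj 1 p)).const_mul (1/2 : ℂ)).sub
      ((((hprj 0 p).mul (hprj 0 p)).mul (hprj 0 p)).const_mul CC)
  rw [hA, pd_of_has h j]
  fin_cases j <;> (simp [pr, Pi.single_apply]; try ring)

lemma hsq (j : Fin 2) (p : Fin 2 → ℂ) :
    pd j (fun q => -(3*CC) * q 0 ^ 2) p = if j = 0 then -(6*CC) * p 0 else 0 := by
  have hA : (fun q : Fin 2 → ℂ => -(3*CC) * q 0 ^ 2) = fun q => -(3*CC) * (q 0 * q 0) := by
    funext q; ring
  have h : HasFDerivAt (fun q : Fin 2 → ℂ => -(3*CC) * (q 0 * q 0))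
      ((-(3*CC)) • (p 0 • pr 0 + p 0 • pr 0)) p :=
    ((hprj 0 p).mul (hprj 0 p)).const_mul (-(3*CC))
  rw [hA, pd_of_has h j]
  fin_cases j <;> (simp [pr, Pi.single_apply]; try ring)

lemma cG4_0 (j k : Fin 2) (p : Fin 2 → ℂ) : cG4 0 j k p = if j = k then 0 else 1 := by
  have h0 : pd 0 (AG4 0) = fun q => q 1 := funext fun q => by simpa using pdA0 0 q
  have h1 : pd 1 (AG4 0) = fun q => q 0 := funext fun q => by simpa using pdA0 1 q
  fin_cases j <;> fin_cases k <;> simp only [Fin.mk_zero, Fin.mk_one, cG4, sd] <;> (first | rw [h0] | rw [h1]) <;> simp [pd_proj]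

lemma cG4_1 (j k : Fin 2) (p : Fin 2 → ℂ) :
    cG4 1 j k p = if j = 0 ∧ k = 0 then -(6*CC) * p 0 else if j = k then 1 else 0 := by
  have h0 : pd 0 (AG4 1) = fun q => -(3*CC) * q 0 ^ 2 := funext fun q => by simpa using pdA1 0 q
  have h1 : pd 1 (AG4 1) = fun q => q 1 := funext fun q => by simpa using pdA1 1 q
  fin_cases j <;> fin_cases k <;> simp only [Fin.mk_zero, Fin.mk_one, cG4, sd] <;> (first | rw [h0] | rw [h1]) <;> simp only [hsq, pd_proj] <;> simp

theorem G4_potential_oriented_associativity_and_metric :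
    -- oriented associativity: ∂_j∂_l A^i ∂_k∂_m A^l = ∂_k∂_l A^i ∂_j∂_m A^l
    (∀ (p : Fin 2 → ℂ) (i j k m : Fin 2),
      (∑ l, cG4 i j l p * cG4 l k m p) = ∑ l, cG4 i k l p * cG4 l j m p) ∧
    -- e = ∂/∂u₂ is the unit: ∂₂∂_i A^j = δ^j_i
    (∀ (p : Fin 2 → ℂ) (i j : Fin 2),
      cG4 j 1 i p = if i = j then (1 : ℂ) else 0) ∧
    -- invariance of the metric: η_{il}cˡ_{jk} = η_{jl}cˡ_{ik}
    (∀ (p : Fin 2 → ℂ) (i j k : Fin 2),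
      (∑ l, ηG4 i l * cG4 l j k p) = ∑ l, ηG4 j l * cG4 l i k p) := by
  refine ⟨?_, ?_, ?_⟩
  · intro p i j k m
    fin_cases i <;> fin_cases j <;> fin_cases k <;> fin_cases m <;>
      simp [Fin.sum_univ_two, cG4_0, cG4_1]
  · intro p i j
    fin_cases i <;> fin_cases j <;> simp [cG4_0, cG4_1]
  · intro p i j k
    fin_cases i <;> fin_cases j <;> fin_cases k <;>
      simp [Fin.sum_univ_two, cG4_0, cG4_1, ηG4]
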